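/- Let (𝒫, 𝓡) be a control problem satisfying CNMS with 𝓡 = {R1,...,Rn}. Then the modular supervisors Sj = P || Rj (with P = ||𝒫) are nonconflicting: S1 || ... || Sn = P || R1 || ... || Rn is nonblocking. -/

import Mathlib

open scoped Classical

/-- A finite-automaton-style structure: alphabet, partial transition
function, initial state, and marked states. -/
structure Aut (Q E : Type) where
  alph : Set E
  δ : Q → E → Option Q
  q0 : Q
  Qm : Set Q

namespace Aut

variable {Q Q1 Q2 E : Type}

/-- Extension of the partial transition function to strings. -/
def run (A : Aut Q E) : Q → List E → Option Q
  | q, [] => some q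
  | q, e :: s => (A.δ q e).bind fun q' => A.run q' s

/-- Generated language. -/
def Lang (A : Aut Q E) : Set (List E) := {s | (A.run A.q0 s).isSome}

/-- Marked language. -/
def LangM (A : Aut Q E) : Set (List E) := {s | ∃ q ∈ A.Qm, A.run A.q0 s = some q}

def Reachable (A : Aut Q E) (q : Q) : Prop := ∃ s, A.run A.q0 s = some q

def Coreachable (A : Aut Q E) (q : Q) : Prop :=
  ∃ s q', A.run q s = some q' ∧ q' ∈ A.Qm

def Trim (A : Aut Q E) : Prop := ∀ q, A.Reachable q ∧ A.Coreachable q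

def Nonblocking (A : Aut Q E) : Prop := ∀ q, A.Reachable q → A.Coreachable q

def StronglyConnected (A : Aut Q E) : Prop := ∀ q1 q2 : Q, ∃ s, A.run q1 s = some q2

/-- Synchronous composition of two automata. -/
noncomputable def sync (A : Aut Q1 E) (B : Aut Q2 E) : Aut (Q1 × Q2) E where
  alph := A.alph ∪ B.alph
  δ := fun p e =>
    if e ∈ A.alph ∧ e ∈ B.alph then
      match A.δ p.1 e, B.δ p.2 e with
      | some a, some b => some (a, b)
      | _, _ => none
    else if e ∈ A.alph then (A.δ p.1 e).map (fun a => (a, p.2))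
    else if e ∈ B.alph then (B.δ p.2 e).map (fun b => (p.1, b))
    else none
  q0 := (A.q0, B.q0)
  Qm := {p | p.1 ∈ A.Qm ∧ p.2 ∈ B.Qm}

end Aut

namespace Aut

/-- Synchronous composition of a product system (pairwise disjoint alphabets):
the shuffle automaton on the product state space. -/
noncomputable def shuffle {m : ℕ} {Q : Fin m → Type} {E : Type}
    (A : ∀ i, Aut (Q i) E) : Aut (∀ i, Q i) E where
  alph := ⋃ i, (A i).alph
  δ := fun q e =>
    if h : ∃ i, e ∈ (A i).alph then
      ((A h.choose).δ (q h.choose) e).map fun q' => Function.update q h.choose q'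
    else none
  q0 := fun i => (A i).q0
  Qm := {q | ∀ i, q i ∈ (A i).Qm}

end Aut

namespace Aut

/-- Synchronous composition of an automaton with a state-event invariant
expression `μ needs C`: transitions labeled `μ` are removed from states
where the condition `C` is false. -/
noncomputable def restrict {Q E : Type} (A : Aut Q E) (μ : E) (C : Q → Prop) :
    Aut Q E where
  alph := A.alph
  δ := fun q e => if e = μ ∧ ¬ C q then none else A.δ q e
  q0 := A.q0
  Qm := A.Qm

end Aut

/-- A literal: a (possibly negated) state reference `P_i.q`. -/
structure Lit (m : ℕ) (Q : Fin m → Type) where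
  i : Fin m
  q : Q i
  pos : Bool

/-- Evaluation of a literal at a global state. -/
def Lit.eval {m : ℕ} {Q : Fin m → Type} (l : Lit m Q) (r : ∀ i, Q i) : Prop :=
  if l.pos then r l.i = l.q else r l.i ≠ l.q

/-- A predicate in disjunctive normal form over state references. -/
abbrev DNF (m : ℕ) (Q : Fin m → Type) := List (List (Lit m Q))

/-- Evaluation of a DNF predicate at a global state. -/
def DNF.eval {m : ℕ} {Q : Fin m → Type} (C : DNF m Q) (r : ∀ i, Q i) : Prop :=
  ∃ conj ∈ C, ∀ l ∈ conj, l.eval r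

/-- `K` is controllable with respect to `G` (given uncontrollable events `Su`). -/
def Controllable {QK QG E : Type} (Su : Set E) (K : Aut QK E) (G : Aut QG E) : Prop :=
  ∀ (s : List E) (u : E), u ∈ Su → (K.run K.q0 s).isSome →
    (G.run G.q0 (s ++ [u])).isSome → (K.run K.q0 (s ++ [u])).isSome

/-- A control problem satisfying the CNMS properties. -/
structure CNMS (m : ℕ) (Q : Fin m → Type) (E : Type) where
  plant : ∀ i, Aut (Q i) E
  /-- controllable events -/
  Sc : Set E
  /-- uncontrollable events -/
  Su : Set E
  /-- the requirements: state-event invariant expressions `μ needs C` -/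
  reqs : List (E × DNF m Q)
  /-- controllable and uncontrollable events are disjoint -/
  part : ∀ e : E, ¬(e ∈ Sc ∧ e ∈ Su)
  /-- each alphabet consists of controllable and uncontrollable events -/
  events : ∀ i, (plant i).alph ⊆ Sc ∪ Su
  /-- Property 1: the plant is a product system (pairwise disjoint alphabets) -/
  disj : ∀ i j, i ≠ j → ∀ e, ¬(e ∈ (plant i).alph ∧ e ∈ (plant j).alph)
  /-- transitions are labeled only by events of the owning plant's alphabet -/
  dom : ∀ i q e, (plant i).δ q e ≠ none → e ∈ (plant i).alph
  /-- Property 2: each plant is strongly connected ... -/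
  sc : ∀ i, (plant i).StronglyConnected
  /-- ... with at least one marked state -/
  hasMarked : ∀ i, ∃ q, q ∈ (plant i).Qm
  /-- each restricted event belongs to some plant -/
  evIn : ∀ r ∈ reqs, ∃ i, r.1 ∈ (plant i).alph
  /-- Property 3.b: restricted events are controllable -/
  ctrl : ∀ r ∈ reqs, r.1 ∈ Sc
  /-- Property 3.c: at most one requirement per event -/
  uniq : ∀ r1 ∈ reqs, ∀ r2 ∈ reqs, r1.1 = r2.1 → r1 = r2
  /-- Property 3.e: each conjunction references each plant at most once -/
  once : ∀ r ∈ reqs, ∀ conj ∈ r.2, ∀ l1 ∈ conj, ∀ l2 ∈ conj, l1.i = l2.i → l1 = l2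
  /-- Property 3.f: no negated reference to a single-state plant -/
  nneg : ∀ r ∈ reqs, ∀ conj ∈ r.2, ∀ l ∈ conj, l.pos = false → ∃ a b : Q l.i, a ≠ b
  /-- Property 3.g: each plant referenced in a condition is a sensor automaton -/
  sens : ∀ r ∈ reqs, ∀ conj ∈ r.2, ∀ l ∈ conj, (plant l.i).alph ⊆ Su
  /-- each condition is a nonempty DNF -/
  condNe : ∀ r ∈ reqs, r.2 ≠ []

namespace CNMS

variable {m : ℕ} {Q : Fin m → Type} {E : Type}

/-- The composed (monolithic) plant `‖𝒫`. -/
noncomputable def plantComp (cp : CNMS m Q E) : Aut (∀ i, Q i) E :=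
  Aut.shuffle cp.plant

/-- `𝒫 ‖ 𝓡`: the plant composed with all requirements. -/
noncomputable def sup (cp : CNMS m Q E) : Aut (∀ i, Q i) E :=
  cp.reqs.foldl (fun A r => A.restrict r.1 (fun g => r.2.eval g)) cp.plantComp

end CNMS

section Aux

open Aut

variable {m : ℕ} {Q : Fin m → Type} {E : Type}

theorem Aut.run_append {Q' : Type} (A : Aut Q' E) (q : Q') (s t : List E) :
    A.run q (s ++ t) = (A.run q s).bind (fun q' => A.run q' t) := by
  induction s generalizing q with
  | nil => simp [Aut.run]
  | cons e s ih =>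
    simp only [List.cons_append, Aut.run]
    cases A.δ q e with
    | none => rfl
    | some q' => simp [ih]

theorem Lit.eval_congr (l : Lit m Q) {r1 r2 : ∀ i, Q i} (h : r1 l.i = r2 l.i) :
    l.eval r1 ↔ l.eval r2 := by
  unfold Lit.eval
  rw [h]

/-- q0 is preserved by folding restrictions. -/
theorem foldl_restrict_q0 (L : List (E × DNF m Q)) (A : Aut (∀ i, Q i) E) :
    (L.foldl (fun A r => A.restrict r.1 (fun g => r.2.eval g)) A).q0 = A.q0 := by
  induction L generalizing A with
  | nil => rfl
  | cons r L ih => exact ih _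

/-- Qm is preserved by folding restrictions. -/
theorem foldl_restrict_Qm (L : List (E × DNF m Q)) (A : Aut (∀ i, Q i) E) :
    (L.foldl (fun A r => A.restrict r.1 (fun g => r.2.eval g)) A).Qm = A.Qm := by
  induction L generalizing A with
  | nil => rfl
  | cons r L ih => exact ih _

/-- If every requirement on event `e` is satisfied at `g`, the folded
restriction does not block `e`. -/
theorem foldl_restrict_δ (L : List (E × DNF m Q)) (A : Aut (∀ i, Q i) E)
    (g : ∀ i, Q i) (e : E) (h : ∀ r ∈ L, r.1 = e → r.2.eval g) :
    (L.foldl (fun A r => A.restrict r.1 (fun g => r.2.eval g)) A).δ g e = A.δ g e := by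
  induction L generalizing A with
  | nil => rfl
  | cons r L ih =>
    have := ih (A.restrict r.1 (fun g => r.2.eval g))
      (fun r' hr' => h r' (List.mem_cons_of_mem _ hr'))
    rw [List.foldl_cons, this]
    simp only [Aut.restrict]
    rw [if_neg]
    rintro ⟨he, hne⟩
    exact hne (h r (List.mem_cons_self) he.symm)

/-- Shuffle step: with pairwise disjoint alphabets, an event of plant `i`
moves only component `i`. -/
theorem shuffle_δ {A : ∀ i, Aut (Q i) E}
    (hd : ∀ i j, i ≠ j → ∀ e, ¬(e ∈ (A i).alph ∧ e ∈ (A j).alph))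
    {i : Fin m} {e : E} (hi : e ∈ (A i).alph) (g : ∀ j, Q j) :
    (Aut.shuffle A).δ g e = ((A i).δ (g i) e).map (fun q' => Function.update g i q') := by
  have hex : ∃ j, e ∈ (A j).alph := ⟨i, hi⟩
  have hce : hex.choose = i := by
    by_contra h
    exact hd _ _ h e ⟨hex.choose_spec, hi⟩
  simp only [Aut.shuffle, dif_pos hex]
  cases hce
  rfl

namespace CNMS

variable (cp : CNMS m Q E)

theorem sup_δ (g : ∀ i, Q i) (e : E) (h : ∀ r ∈ cp.reqs, r.1 = e → r.2.eval g) :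
    cp.sup.δ g e = cp.plantComp.δ g e :=
  foldl_restrict_δ _ _ _ _ h

theorem sup_Qm : cp.sup.Qm = {g : ∀ i, Q i | ∀ i, g i ∈ (cp.plant i).Qm} := by
  have : cp.sup.Qm = cp.plantComp.Qm := foldl_restrict_Qm _ _
  rw [this]; rfl

theorem sup_step {i : Fin m} {e : E} {q' : Q i} (g : ∀ j, Q j)
    (hi : e ∈ (cp.plant i).alph) (hδ : (cp.plant i).δ (g i) e = some q')
    (h : ∀ r ∈ cp.reqs, r.1 = e → r.2.eval g) :
    cp.sup.δ g e = some (Function.update g i q') := by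
  rw [cp.sup_δ g e h]
  show (Aut.shuffle cp.plant).δ g e = _
  rw [shuffle_δ cp.disj hi, hδ]
  rfl

/-- A "sensor" plant (alphabet fully uncontrollable) can be moved freely. -/
theorem liftFree {i : Fin m} (hs : (cp.plant i).alph ⊆ cp.Su) :
    ∀ (s : List E) (g : ∀ j, Q j) (q : Q i),
      (cp.plant i).run (g i) s = some q →
      cp.sup.run g s = some (Function.update g i q) := by
  intro s
  induction s with
  | nil =>
    intro g q h
    simp only [Aut.run, Option.some.injEq] at h
    simp [Aut.run, h, Function.update_eq_self]
  | cons e s ih =>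
    intro g q h
    simp only [Aut.run] at h
    obtain ⟨q1, hq1, hrest⟩ : ∃ q1, (cp.plant i).δ (g i) e = some q1 ∧
        (cp.plant i).run q1 s = some q := by
      cases hδ : (cp.plant i).δ (g i) e with
      | none => rw [hδ] at h; simp at h
      | some q1 => rw [hδ] at h; exact ⟨q1, rfl, h⟩
    have hi : e ∈ (cp.plant i).alph := cp.dom i (g i) e (by rw [hq1]; simp)
    have hnoreq : ∀ r ∈ cp.reqs, r.1 = e → r.2.eval g := by
      intro r hr he
      exact absurd (And.intro (he ▸ cp.ctrl r hr) (hs hi)) (cp.part e)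
    have hstep := cp.sup_step g hi hq1 hnoreq
    show (cp.sup.δ g e).bind _ = _
    rw [hstep]
    simp only [Option.bind_some]
    have := ih (Function.update g i q1) q (by rw [Function.update_self]; exact hrest)
    rw [this, Function.update_idem]

/-- Satisfy all literals of (a subset of) a conjunction by moving the
referenced sensor plants, without disturbing any non-sensor plant. -/
theorem satisfy {r : E × DNF m Q} (hr : r ∈ cp.reqs) {conj : List (Lit m Q)}
    (hc : conj ∈ r.2) :
    ∀ (cj : List (Lit m Q)), (∀ l ∈ cj, l ∈ conj) → ∀ g : ∀ j, Q j,
      ∃ s g', cp.sup.run g s = some g' ∧ (∀ l ∈ cj, l.eval g') ∧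
        ∀ j, ¬ ((cp.plant j).alph ⊆ cp.Su) → g' j = g j := by
  intro cj
  induction cj with
  | nil =>
    intro _ g
    exact ⟨[], g, rfl, by simp, fun _ _ => rfl⟩
  | cons l cj ih =>
    intro hsub g
    have hl : l ∈ conj := hsub l (List.mem_cons_self)
    obtain ⟨s1, g1, hrun1, heval1, hpres1⟩ :=
      ih (fun l' hl' => hsub l' (List.mem_cons_of_mem _ hl')) g
    have hsens : (cp.plant l.i).alph ⊆ cp.Su := cp.sens r hr conj hc l hl
    obtain ⟨target, ht⟩ : ∃ t : Q l.i, if l.pos = true then t = l.q else t ≠ l.q := by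
      cases hp : l.pos with
      | true => exact ⟨l.q, by simp⟩
      | false =>
        obtain ⟨a, b, hab⟩ := cp.nneg r hr conj hc l hl hp
        by_cases ha : a = l.q
        · exact ⟨b, by simp [ha ▸ hab.symm]⟩
        · exact ⟨a, by simp [ha]⟩
    obtain ⟨s2, hs2⟩ := cp.sc l.i (g1 l.i) target
    have hrun2 := cp.liftFree hsens s2 g1 target hs2
    set g2 := Function.update g1 l.i target with hg2
    refine ⟨s1 ++ s2, g2, ?_, ?_, ?_⟩
    · rw [Aut.run_append, hrun1, Option.bind_some, hrun2]
    · intro l' hl'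
      rcases List.mem_cons.mp hl' with h | h
      · subst h
        unfold Lit.eval
        rw [hg2, Function.update_self]
        exact ht
      · by_cases hii : l'.i = l.i
        · have : l' = l := cp.once r hr conj hc l' (hsub l' hl') l hl hii
          subst this
          unfold Lit.eval
          rw [hg2, Function.update_self]
          exact ht
        · have hcomp : g2 l'.i = g1 l'.i := Function.update_of_ne hii _ _
          exact (Lit.eval_congr l' hcomp).mpr (heval1 l' h)
    · intro j hj
      have hji : j ≠ l.i := fun h => hj (h ▸ hsens)
      rw [hg2, Function.update_of_ne hji, hpres1 j hj]

/-- Drive plant `i` along a string of its own transitions, satisfying any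
requirement conditions along the way; only plant `i` and sensor plants move. -/
theorem drive (i : Fin m) :
    ∀ (s : List E) (g : ∀ j, Q j) (q : Q i),
      (cp.plant i).run (g i) s = some q →
      ∃ t g', cp.sup.run g t = some g' ∧ g' i = q ∧
        ∀ j, j ≠ i → ¬ ((cp.plant j).alph ⊆ cp.Su) → g' j = g j := by
  intro s
  induction s with
  | nil =>
    intro g q h
    simp only [Aut.run, Option.some.injEq] at h
    exact ⟨[], g, rfl, h, fun _ _ _ => rfl⟩
  | cons e s ih =>
    intro g q h
    simp only [Aut.run] at h
    obtain ⟨q1, hq1, hrest⟩ : ∃ q1, (cp.plant i).δ (g i) e = some q1 ∧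
        (cp.plant i).run q1 s = some q := by
      cases hδ : (cp.plant i).δ (g i) e with
      | none => rw [hδ] at h; simp at h
      | some q1 => rw [hδ] at h; exact ⟨q1, rfl, h⟩
    have hi : e ∈ (cp.plant i).alph := cp.dom i (g i) e (by rw [hq1]; simp)
    -- Prepare: satisfy the conditions of any requirement on `e`.
    obtain ⟨s1, g1, hrun1, hcond, hpres1, hgi⟩ :
        ∃ s1 g1, cp.sup.run g s1 = some g1 ∧
          (∀ r ∈ cp.reqs, r.1 = e → r.2.eval g1) ∧
          (∀ j, ¬ ((cp.plant j).alph ⊆ cp.Su) → g1 j = g j) ∧ g1 i = g i := by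
      by_cases hreq : ∃ r ∈ cp.reqs, r.1 = e
      · obtain ⟨r0, hr0, he0⟩ := hreq
        have hne : r0.2 ≠ [] := cp.condNe r0 hr0
        obtain ⟨conj, rest, hconj⟩ : ∃ c cs, r0.2 = c :: cs := by
          cases hc : r0.2 with
          | nil => exact absurd hc hne
          | cons c cs => exact ⟨c, cs, rfl⟩
        have hcm : conj ∈ r0.2 := hconj ▸ List.mem_cons_self
        obtain ⟨s1, g1, hrun1, heval, hpres⟩ :=
          cp.satisfy hr0 hcm conj (fun _ hl => hl) g
        have hins : ¬ ((cp.plant i).alph ⊆ cp.Su) := by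
          intro hsub
          exact cp.part e ⟨he0 ▸ cp.ctrl r0 hr0, hsub hi⟩
        refine ⟨s1, g1, hrun1, ?_, hpres, hpres i hins⟩
        intro r' hr' he'
        have : r' = r0 := cp.uniq r' hr' r0 hr0 (he'.trans he0.symm)
        subst this
        exact ⟨conj, hcm, heval⟩
      · refine ⟨[], g, rfl, ?_, fun _ _ => rfl, rfl⟩
        intro r' hr' he'
        exact absurd ⟨r', hr', he'⟩ hreq
    have hstep := cp.sup_step g1 hi (hgi ▸ hq1) hcond
    set g2 := Function.update g1 i q1 with hg2
    obtain ⟨t, g', hrun', hq', hpres'⟩ :=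
      ih g2 q (by rw [hg2, Function.update_self]; exact hrest)
    refine ⟨s1 ++ e :: t, g', ?_, hq', ?_⟩
    · rw [Aut.run_append, hrun1, Option.bind_some]
      show (cp.sup.δ g1 e).bind _ = _
      rw [hstep, Option.bind_some]
      exact hrun'
    · intro j hj hns
      rw [hpres' j hj hns, hg2, Function.update_of_ne hj, hpres1 j hns]

/-- Phase 1: drive all non-sensor plants in `L` to marked states. -/
theorem phase1 (qm : ∀ i, Q i) (hqm : ∀ i, qm i ∈ (cp.plant i).Qm) :
    ∀ (L : List (Fin m)) (g : ∀ j, Q j),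
      ∃ s g', cp.sup.run g s = some g' ∧
        (∀ i ∈ L, ¬ ((cp.plant i).alph ⊆ cp.Su) → g' i ∈ (cp.plant i).Qm) ∧
        (∀ j, ¬ ((cp.plant j).alph ⊆ cp.Su) → j ∉ L → g' j = g j) := by
  intro L
  induction L with
  | nil =>
    intro g
    exact ⟨[], g, rfl, by simp, fun _ _ _ => rfl⟩
  | cons i L ih =>
    intro g
    obtain ⟨s1, g1, hrun1, hmk1, hpres1⟩ := ih g
    by_cases hsi : (cp.plant i).alph ⊆ cp.Su
    · refine ⟨s1, g1, hrun1, ?_, ?_⟩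
      · intro i' hi' hns
        rcases List.mem_cons.mp hi' with h | h
        · exact absurd (h ▸ hsi) hns
        · exact hmk1 i' h hns
      · intro j hns hj
        exact hpres1 j hns (fun h => hj (List.mem_cons_of_mem _ h))
    · obtain ⟨s2, hs2⟩ := cp.sc i (g1 i) (qm i)
      obtain ⟨t, g', hrun', hgi, hpres'⟩ := cp.drive i s2 g1 (qm i) hs2
      refine ⟨s1 ++ t, g', ?_, ?_, ?_⟩
      · rw [Aut.run_append, hrun1, Option.bind_some]; exact hrun'
      · intro i' hi' hns
        rcases List.mem_cons.mp hi' with h | h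
        · subst h; rw [hgi]; exact hqm i'
        · by_cases hii : i' = i
          · subst hii; rw [hgi]; exact hqm i'
          · rw [hpres' i' hii hns]; exact hmk1 i' h hns
      · intro j hns hj
        have hji : j ≠ i := fun h => hj (h ▸ List.mem_cons_self)
        rw [hpres' j hji hns, hpres1 j hns (fun h => hj (List.mem_cons_of_mem _ h))]

/-- Phase 2: drive all sensor plants in `L` to marked states, moving nothing
else. -/
theorem phase2 (qm : ∀ i, Q i) (hqm : ∀ i, qm i ∈ (cp.plant i).Qm) :
    ∀ (L : List (Fin m)) (g : ∀ j, Q j),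
      ∃ s g', cp.sup.run g s = some g' ∧
        (∀ i ∈ L, (cp.plant i).alph ⊆ cp.Su → g' i ∈ (cp.plant i).Qm) ∧
        (∀ j, ¬ ((cp.plant j).alph ⊆ cp.Su) → g' j = g j) := by
  intro L
  induction L with
  | nil =>
    intro g
    exact ⟨[], g, rfl, by simp, fun _ _ => rfl⟩
  | cons i L ih =>
    intro g
    obtain ⟨s1, g1, hrun1, hmk1, hpres1⟩ := ih g
    by_cases hsi : (cp.plant i).alph ⊆ cp.Su
    · obtain ⟨s2, hs2⟩ := cp.sc i (g1 i) (qm i)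
      have hrun2 := cp.liftFree hsi s2 g1 (qm i) hs2
      set g2 := Function.update g1 i (qm i) with hg2
      refine ⟨s1 ++ s2, g2, ?_, ?_, ?_⟩
      · rw [Aut.run_append, hrun1, Option.bind_some]; exact hrun2
      · intro i' hi' _
        by_cases hii : i' = i
        · subst hii; rw [hg2, Function.update_self]; exact hqm i'
        · rw [hg2, Function.update_of_ne hii]
          exact hmk1 i' ((List.mem_cons.mp hi').resolve_left hii) (by assumption)
      · intro j hns
        have hji : j ≠ i := fun h => hns (h ▸ hsi)
        rw [hg2, Function.update_of_ne hji, hpres1 j hns]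
    · refine ⟨s1, g1, hrun1, ?_, hpres1⟩
      intro i' hi' hsi'
      rcases List.mem_cons.mp hi' with h | h
      · exact absurd (h ▸ hsi') hsi
      · exact hmk1 i' h hsi'

end CNMS

end Aux

/-- for a CNMS control problem, the modular supervisors
`Sj = P ‖ Rj` are nonconflicting: `S1 ‖ ... ‖ Sn = P ‖ R1 ‖ ... ‖ Rn`
is nonblocking. -/
theorem cnms_nonconflicting {m : ℕ} {Q : Fin m → Type} {E : Type}
    (cp : CNMS m Q E) :
    cp.sup.Nonblocking := by
  intro g _
  classical
  have hqm : ∀ i, ∃ q, q ∈ (cp.plant i).Qm := cp.hasMarked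
  choose qm hqm using hqm
  obtain ⟨s1, g1, hrun1, hmk1, _⟩ := cp.phase1 qm hqm (List.finRange m) g
  obtain ⟨s2, g2, hrun2, hmk2, hpres2⟩ := cp.phase2 qm hqm (List.finRange m) g1
  refine ⟨s1 ++ s2, g2, ?_, ?_⟩
  · rw [Aut.run_append, hrun1, Option.bind_some]; exact hrun2
  · rw [cp.sup_Qm]
    intro i
    by_cases hs : (cp.plant i).alph ⊆ cp.Su
    · exact hmk2 i (List.mem_finRange i) hs
    · rw [hpres2 i hs]
      exact hmk1 i (List.mem_finRange i) hs
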